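/- Let J : (0,1) → ℝ be measurable with |J(u)| ≤ K[u(1−u)]^{−1/2+δ} for all u ∈ (0,1), for some constants K > 0 and δ ∈ (0, 1/2). Let F_1, …, F_k : ℝ → [0,1] be continuous cumulative distribution functions of Borel probability measures μ_1, …, μ_k on ℝ, let λ_1, …, λ_k ≥ λ_0 > 0 with Σ_j λ_j = 1, and set H = Σ_j λ_j F_j. Then for each j, H(x) ∈ (0,1) for μ_j-almost every x, the function x ↦ |J(H(x))| is μ_j-integrable, and ∫_ℝ |J(H(x))| dμ_j(x) ≤ (K/λ_0) ∫_0^1 [u(1−u)]^{−1/2+δ} du < ∞. -/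

import Mathlib

open MeasureTheory Set Filter Topology ProbabilityTheory
open scoped ENNReal

namespace ChernoffSavageAux

lemma level_measure (ν : Measure ℝ) [IsProbabilityMeasure ν] {G : ℝ → ℝ}
    (hG : ∀ x, G x = (ν (Iic x)).toReal) (hGc : Continuous G) (t : ℝ) :
    ν {x | G x ≤ t} = ENNReal.ofReal (min t 1) := by
  have hGcdf : ∀ x, G x = cdf ν x := fun x => by rw [hG, cdf_eq_real, measureReal_def]
  have hmono : Monotone G := fun a b hab => by
    rw [hGcdf, hGcdf]; exact monotone_cdf ν hab
  have hIic : ∀ x, ν (Iic x) = ENNReal.ofReal (G x) := fun x => by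
    rw [hGcdf, ofReal_cdf]
  have hle1 : ∀ x, G x ≤ 1 := fun x => by rw [hGcdf]; exact cdf_le_one ν x
  have htop : Tendsto G atTop (𝓝 1) :=
    (tendsto_cdf_atTop ν).congr fun x => (hGcdf x).symm
  have hbot : Tendsto G atBot (𝓝 0) :=
    (tendsto_cdf_atBot ν).congr fun x => (hGcdf x).symm
  rcases le_or_gt 1 t with h1 | h1
  · have hset : {x | G x ≤ t} = univ := eq_univ_of_forall fun x => (hle1 x).trans h1
    rw [hset, measure_univ, min_eq_right h1, ENNReal.ofReal_one]
  · rw [min_eq_left h1.le]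
    by_cases hne : {x | G x ≤ t}.Nonempty
    · have hclosed : IsClosed {x | G x ≤ t} := isClosed_le hGc continuous_const
      have hbdd : BddAbove {x | G x ≤ t} := by
        obtain ⟨b, hb⟩ := eventually_atTop.mp (htop.eventually (eventually_gt_nhds h1))
        exact ⟨b, fun x hx => le_of_not_gt fun h => absurd (hb x h.le) (not_lt.2 hx)⟩
      set a := sSup {x | G x ≤ t} with ha
      have haS : G a ≤ t := hclosed.csSup_mem hne hbdd
      have hSeq : {x | G x ≤ t} = Iic a := by
        apply Subset.antisymm
        · exact fun x hx => le_csSup hbdd hx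
        · exact fun x hx => le_trans (hmono hx) haS
      have hta : ENNReal.ofReal (G a) = ENNReal.ofReal t := by
        rcases le_or_gt t 0 with ht0 | ht0
        · rw [ENNReal.ofReal_eq_zero.2 (haS.trans ht0), eq_comm, ENNReal.ofReal_eq_zero]
          exact ht0
        · congr 1
          refine le_antisymm haS ?_
          by_contra hlt
          push_neg at hlt
          have hopen : {x | G x < t} ∈ 𝓝 a :=
            (isOpen_lt hGc continuous_const).mem_nhds hlt
          obtain ⟨l, u, hau, hsub⟩ := mem_nhds_iff_exists_Ioo_subset.mp hopen
          have hal : l < a := hau.1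
          have hau2 : a < u := hau.2
          have hmid : (a + u) / 2 ∈ Ioo l u := ⟨by linarith, by linarith⟩
          have hmem : (a + u) / 2 ∈ {x | G x ≤ t} := by
            have h6 := hsub hmid
            simp only [mem_setOf_eq] at h6 ⊢
            exact h6.le
          have := le_csSup hbdd hmem
          rw [← ha] at this
          linarith
      rw [hSeq, hIic a, hta]
    · rw [not_nonempty_iff_eq_empty] at hne
      rw [hne, measure_empty, eq_comm, ENNReal.ofReal_eq_zero]
      by_contra ht0
      push_neg at ht0
      obtain ⟨x, hx⟩ := (hbot.eventually (eventually_lt_nhds ht0)).exists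
      exact (Set.not_nonempty_iff_eq_empty.2 hne) ⟨x, hx.le⟩

lemma bad_set_null (ν : Measure ℝ) [IsProbabilityMeasure ν] {G : ℝ → ℝ}
    (hG : ∀ x, G x = (ν (Iic x)).toReal) (hGc : Continuous G) :
    ν {x | G x ∉ Ioo (0 : ℝ) 1} = 0 := by
  have h0 : ν {x | G x ≤ 0} = 0 := by
    rw [level_measure ν hG hGc 0]
    simp
  have h1 : ν {x | 1 ≤ G x} = 0 := by
    have hlt : ∀ n : ℕ, ENNReal.ofReal (1 - 1 / (n + 1)) ≤ ν {x | G x < 1} := by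
      intro n
      have hn1 : (1 : ℝ) - 1 / (n + 1) < 1 := by
        have : (0 : ℝ) < 1 / (n + 1) := by positivity
        linarith
      have := level_measure ν hG hGc (1 - 1 / (n + 1))
      rw [min_eq_left hn1.le] at this
      rw [← this]
      exact measure_mono fun x hx => lt_of_le_of_lt hx hn1
    have hlim : Tendsto (fun n : ℕ => ENNReal.ofReal (1 - 1 / (n + 1))) atTop (𝓝 1) := by
      have hr : Tendsto (fun n : ℕ => (1 : ℝ) - 1 / (n + 1)) atTop (𝓝 1) := by
        have := tendsto_one_div_add_atTop_nhds_zero_nat (𝕜 := ℝ)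
        simpa using (tendsto_const_nhds (x := (1:ℝ))).sub this
      have := ENNReal.tendsto_ofReal hr
      simpa using this
    have hge : (1 : ℝ≥0∞) ≤ ν {x | G x < 1} := le_of_tendsto' hlim hlt
    have hmeas : MeasurableSet {x | G x < 1} := measurableSet_lt hGc.measurable measurable_const
    have heq : ν {x | G x < 1} = 1 := le_antisymm prob_le_one hge
    have hcompl : {x | 1 ≤ G x} = {x | G x < 1}ᶜ := by
      ext x; simp [not_lt]
    rw [hcompl, measure_compl hmeas (measure_ne_top ν _), heq, measure_univ, tsub_self]
  refine measure_mono_null ?_ (measure_union_null h0 h1)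
  intro x hx
  simp only [mem_setOf_eq, mem_Ioo, not_and_or, not_lt] at hx
  rcases hx with hx | hx
  · exact Or.inl hx
  · exact Or.inr hx

lemma map_eq (ν : Measure ℝ) [IsProbabilityMeasure ν] {G : ℝ → ℝ}
    (hG : ∀ x, G x = (ν (Iic x)).toReal) (hGc : Continuous G) :
    ν.map G = volume.restrict (Ioo (0 : ℝ) 1) := by
  haveI : IsProbabilityMeasure (ν.map G) :=
    Measure.isProbabilityMeasure_map hGc.measurable.aemeasurable
  refine Measure.ext_of_Iic _ _ fun t => ?_
  rw [Measure.map_apply hGc.measurable measurableSet_Iic]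
  have hpre : G ⁻¹' Iic t = {x | G x ≤ t} := rfl
  rw [hpre, level_measure ν hG hGc t, Measure.restrict_apply measurableSet_Iic]
  rcases le_or_gt t 0 with h | h
  · have hempty : Iic t ∩ Ioo (0:ℝ) 1 = ∅ := by
      apply eq_empty_of_forall_notMem
      rintro x ⟨hx1, hx2, _⟩
      exact absurd (lt_of_lt_of_le hx2 hx1) (not_lt.2 h)
    rw [hempty, measure_empty]
    exact ENNReal.ofReal_eq_zero.2 (le_trans (min_le_left t 1) h)
  · rcases le_or_gt 1 t with h1 | h1
    · have heq : Iic t ∩ Ioo (0:ℝ) 1 = Ioo 0 1 :=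
        inter_eq_right.2 fun x hx => le_trans hx.2.le h1
      rw [heq, Real.volume_Ioo, min_eq_right h1]
      norm_num
    · have heq : Iic t ∩ Ioo (0:ℝ) 1 = Ioc 0 t := by
        ext x
        simp only [mem_inter_iff, mem_Iic, mem_Ioo, mem_Ioc]
        constructor
        · rintro ⟨hxt, hx0, _⟩; exact ⟨hx0, hxt⟩
        · rintro ⟨hx0, hxt⟩; exact ⟨hxt, hx0, lt_of_le_of_lt hxt h1⟩
      rw [heq, Real.volume_Ioc, min_eq_left h1.le, sub_zero]

lemma integrableOn_weight {p : ℝ} (hp1 : -1 < p) (hp0 : p ≤ 0) :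
    IntegrableOn (fun u : ℝ => (u * (1 - u)) ^ p) (Ioo (0 : ℝ) 1) := by
  have hcont : ContinuousOn (fun u : ℝ => (u * (1 - u)) ^ p) (Ioo (0:ℝ) 1) := by
    apply ContinuousOn.rpow_const
    · exact (continuousOn_id.mul (continuousOn_const.sub continuousOn_id))
    · intro x hx
      left
      have : 0 < x * (1 - x) := mul_pos hx.1 (by linarith [hx.2])
      exact this.ne'
  have hxint : ∀ a b : ℝ, a ≤ b → IntegrableOn (fun u : ℝ => u ^ p) (Ioc a b) := by
    intro a b hab
    have := intervalIntegral.intervalIntegrable_rpow' (a := a) (b := b) hp1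
    rwa [intervalIntegrable_iff_integrableOn_Ioc_of_le hab] at this
  have h1 : IntegrableOn (fun u : ℝ => (u * (1 - u)) ^ p) (Ioc (0:ℝ) (1/2)) := by
    refine Integrable.mono' (((hxint 0 (1/2) (by norm_num)).mul_const ((1/2 : ℝ) ^ p))) ?_ ?_
    · exact (hcont.mono (by intro x hx; exact ⟨hx.1, lt_of_le_of_lt hx.2 (by norm_num)⟩)).aestronglyMeasurable measurableSet_Ioc
    · refine (ae_restrict_iff' measurableSet_Ioc).2 (ae_of_all _ fun u hu => ?_)
      have hu0 : (0:ℝ) < u := hu.1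
      have hu2 : u ≤ 1/2 := hu.2
      have hbase : 0 < u * (1/2 : ℝ) := by linarith
      have hle : u * (1/2 : ℝ) ≤ u * (1 - u) := by nlinarith
      have h2 : (u * (1 - u)) ^ p ≤ (u * (1/2 : ℝ)) ^ p :=
        Real.rpow_le_rpow_of_nonpos hbase hle hp0
      have h3 : (u * (1/2 : ℝ)) ^ p = u ^ p * (1/2 : ℝ) ^ p :=
        Real.mul_rpow hu0.le (by norm_num)
      rw [Real.norm_eq_abs, abs_of_nonneg (Real.rpow_nonneg (by nlinarith) p)]
      rw [h3] at h2
      exact h2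
  have h2 : IntegrableOn (fun u : ℝ => (u * (1 - u)) ^ p) (Ioo (1/2 : ℝ) 1) := by
    have hyint : IntegrableOn (fun u : ℝ => (1 - u) ^ p) (Ioc (1/2 : ℝ) 1) := by
      have hbase := intervalIntegral.intervalIntegrable_rpow' (a := (0:ℝ)) (b := 1/2) hp1
      have h5 := (hbase.comp_sub_left 1).symm
      norm_num at h5
      rwa [intervalIntegrable_iff_integrableOn_Ioc_of_le (by norm_num)] at h5
    refine Integrable.mono' ((hyint.mono_set Ioo_subset_Ioc_self).mul_const ((1/2 : ℝ) ^ p)) ?_ ?_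
    · exact (hcont.mono (by intro x hx; exact ⟨lt_trans (by norm_num) hx.1, hx.2⟩)).aestronglyMeasurable measurableSet_Ioo
    · refine (ae_restrict_iff' measurableSet_Ioo).2 (ae_of_all _ fun u hu => ?_)
      have hu1 : u < 1 := hu.2
      have hu2 : (1/2 : ℝ) < u := hu.1
      have hbase : 0 < (1 - u) * (1/2 : ℝ) := by linarith
      have hle : (1 - u) * (1/2 : ℝ) ≤ u * (1 - u) := by nlinarith
      have h3 : (u * (1 - u)) ^ p ≤ ((1 - u) * (1/2 : ℝ)) ^ p :=
        Real.rpow_le_rpow_of_nonpos hbase hle hp0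
      have h4 : ((1 - u) * (1/2 : ℝ)) ^ p = (1 - u) ^ p * (1/2 : ℝ) ^ p :=
        Real.mul_rpow (by linarith) (by norm_num)
      rw [Real.norm_eq_abs, abs_of_nonneg (Real.rpow_nonneg (by nlinarith) p)]
      rw [h4] at h3
      exact h3
  refine (h1.union h2).mono_set ?_
  intro x hx
  rcases le_or_gt x (1/2) with h | h
  · exact Or.inl ⟨hx.1, h⟩
  · exact Or.inr ⟨h, hx.2⟩

end ChernoffSavageAux

open ChernoffSavageAux

/-- Under the Chernoff–Savage growth condition (A.2) on the score-generating function `J`,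
the centering constants `∫ J(H) dF_j` are finite: `H ∈ (0,1)` a.e., `|J ∘ H|` is
integrable, and its integral is bounded by `(K/λ_0) ∫_0^1 [u(1−u)]^{−1/2+δ} du < ∞`. -/
theorem score_function_integrable_along_combined_cdf
    {k : ℕ} (J : ℝ → ℝ) (K δ : ℝ) (hK : 0 < K) (hδ : δ ∈ Set.Ioo (0 : ℝ) (1 / 2))
    (hJmeas : Measurable J)
    (hJ : ∀ u ∈ Set.Ioo (0 : ℝ) 1, |J u| ≤ K * (u * (1 - u)) ^ (-(1 / 2 : ℝ) + δ))
    (μ : Fin k → Measure ℝ) [∀ j, IsProbabilityMeasure (μ j)]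
    (F : Fin k → ℝ → ℝ)
    (hF : ∀ j x, F j x = (μ j (Set.Iic x)).toReal)
    (hFcont : ∀ j, Continuous (F j))
    (lam : Fin k → ℝ) (lam0 : ℝ) (hlam0 : 0 < lam0) (hlam : ∀ j, lam0 ≤ lam j)
    (hsum : ∑ j, lam j = 1)
    (H : ℝ → ℝ) (hH : ∀ x, H x = ∑ j, lam j * F j x) :
    ∀ j : Fin k,
      (∀ᵐ x ∂(μ j), H x ∈ Set.Ioo (0 : ℝ) 1) ∧
      Integrable (fun x => |J (H x)|) (μ j) ∧
      IntegrableOn (fun u => (u * (1 - u)) ^ (-(1 / 2 : ℝ) + δ)) (Set.Ioo (0 : ℝ) 1) ∧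
      ∫ x, |J (H x)| ∂(μ j) ≤
        (K / lam0) * ∫ u in Set.Ioo (0 : ℝ) 1, (u * (1 - u)) ^ (-(1 / 2 : ℝ) + δ) := by
  obtain ⟨hδ0, hδ2⟩ := hδ
  set p : ℝ := -(1 / 2 : ℝ) + δ with hp
  have hp1 : (-1 : ℝ) < p := by rw [hp]; linarith
  have hp0 : p ≤ 0 := by rw [hp]; linarith
  set g : ℝ → ℝ := fun u => (u * (1 - u)) ^ p with hg
  have hgint : IntegrableOn g (Ioo (0 : ℝ) 1) := integrableOn_weight hp1 hp0
  have hgcont : ContinuousOn g (Ioo (0 : ℝ) 1) := by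
    apply ContinuousOn.rpow_const
    · exact continuousOn_id.mul (continuousOn_const.sub continuousOn_id)
    · intro x hx
      exact Or.inl (mul_pos hx.1 (by linarith [hx.2])).ne'
  -- basic facts about F and H
  have hlamj0 : ∀ i, 0 < lam i := fun i => lt_of_lt_of_le hlam0 (hlam i)
  have hF0 : ∀ i x, 0 ≤ F i x := fun i x => by rw [hF]; exact ENNReal.toReal_nonneg
  have hH0 : ∀ x, 0 ≤ H x := fun x => by
    rw [hH]; exact Finset.sum_nonneg fun i _ => mul_nonneg (hlamj0 i).le (hF0 i x)
  have hHcont : Continuous H := by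
    have h1 : Continuous fun x => ∑ i, lam i * F i x :=
      continuous_finset_sum _ fun i _ => continuous_const.mul (hFcont i)
    exact h1.congr fun x => (hH x).symm
  -- the combined measure ν
  set ν : Measure ℝ := ∑ i, ENNReal.ofReal (lam i) • μ i with hν
  have hνapp : ∀ s : Set ℝ, ν s = ∑ i, ENNReal.ofReal (lam i) * μ i s := by
    intro s
    rw [hν, Measure.finset_sum_apply]
    simp [Measure.smul_apply, smul_eq_mul]
  have hνIic : ∀ x, ν (Iic x) = ENNReal.ofReal (H x) := by
    intro x
    rw [hνapp, hH, ENNReal.ofReal_sum_of_nonneg fun i _ =>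
      mul_nonneg (hlamj0 i).le (hF0 i x)]
    refine Finset.sum_congr rfl fun i _ => ?_
    rw [ENNReal.ofReal_mul (hlamj0 i).le, hF i x,
      ENNReal.ofReal_toReal (measure_ne_top _ _)]
  haveI hνprob : IsProbabilityMeasure ν := by
    constructor
    rw [hνapp]
    simp only [measure_univ, mul_one]
    rw [← ENNReal.ofReal_sum_of_nonneg fun i _ => (hlamj0 i).le, hsum, ENNReal.ofReal_one]
  have hGν : ∀ x, H x = (ν (Iic x)).toReal := fun x => by
    rw [hνIic, ENNReal.toReal_ofReal (hH0 x)]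
  intro j
  -- measure comparison
  have hcmp : ENNReal.ofReal lam0 • μ j ≤ ν := by
    rw [Measure.le_iff]
    intro s hs
    rw [Measure.smul_apply, smul_eq_mul, hνapp]
    calc ENNReal.ofReal lam0 * μ j s
        ≤ ENNReal.ofReal (lam j) * μ j s := by
          exact mul_le_mul_left (ENNReal.ofReal_le_ofReal (hlam j)) _
      _ ≤ ∑ i, ENNReal.ofReal (lam i) * μ i s :=
          Finset.single_le_sum (f := fun i => ENNReal.ofReal (lam i) * μ i s)
            (fun i _ => zero_le) (Finset.mem_univ j)
  have hlam0ne : ENNReal.ofReal lam0 ≠ 0 := by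
    simp [ENNReal.ofReal_eq_zero, not_le, hlam0]
  -- a.e. statements
  have hνB : ν {x | H x ∉ Ioo (0 : ℝ) 1} = 0 := bad_set_null ν hGν hHcont
  have hμB : μ j {x | H x ∉ Ioo (0 : ℝ) 1} = 0 := by
    have hBmeas : MeasurableSet {x | H x ∉ Ioo (0 : ℝ) 1} :=
      (measurableSet_Ioo.preimage hHcont.measurable).compl
    have h1 := Measure.le_iff.1 hcmp _ hBmeas
    rw [Measure.smul_apply, smul_eq_mul, hνB] at h1
    exact (mul_eq_zero.mp (le_zero_iff.mp h1)).resolve_left hlam0ne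
  have haeμ : ∀ᵐ x ∂(μ j), H x ∈ Ioo (0 : ℝ) 1 := by
    rw [ae_iff]; exact hμB
  have haeν : ∀ᵐ x ∂ν, H x ∈ Ioo (0 : ℝ) 1 := by
    rw [ae_iff]; exact hνB
  -- pushforward
  have hmap : ν.map H = volume.restrict (Ioo (0 : ℝ) 1) := map_eq ν hGν hHcont
  have hgaesm : AEStronglyMeasurable g (ν.map H) := by
    rw [hmap]
    exact hgcont.aestronglyMeasurable measurableSet_Ioo
  have hgH : Integrable (fun x => g (H x)) ν := by
    have h1 : Integrable g (ν.map H) := by rw [hmap]; exact hgint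
    exact (integrable_map_measure hgaesm hHcont.measurable.aemeasurable).mp h1
  have hbound_ν : ∀ᵐ x ∂ν, ‖|J (H x)|‖ ≤ K * g (H x) := by
    refine haeν.mono fun x hx => ?_
    rw [Real.norm_eq_abs, abs_abs]
    exact hJ _ hx
  have hJHaesm : ∀ (m : Measure ℝ), AEStronglyMeasurable (fun x => |J (H x)|) m :=
    fun m => ((hJmeas.comp hHcont.measurable).abs).aestronglyMeasurable
  have hJHint_ν : Integrable (fun x => |J (H x)|) ν :=
    Integrable.mono' (hgH.const_mul K) (hJHaesm ν) hbound_ν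
  have hJHint_μ : Integrable (fun x => |J (H x)|) (μ j) := by
    have h1 : Integrable (fun x => |J (H x)|) (ENNReal.ofReal lam0 • μ j) :=
      hJHint_ν.mono_measure hcmp
    exact (integrable_smul_measure hlam0ne ENNReal.ofReal_ne_top).mp h1
  refine ⟨haeμ, hJHint_μ, hgint, ?_⟩
  -- the integral bound
  have hinteq : ∫ x, g (H x) ∂ν = ∫ u in Ioo (0 : ℝ) 1, g u := by
    have := integral_map (φ := H) (μ := ν) hHcont.measurable.aemeasurable hgaesm
    rw [hmap] at this
    exact this.symm
  have key : lam0 * ∫ x, |J (H x)| ∂(μ j) ≤ K * ∫ u in Ioo (0 : ℝ) 1, g u := by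
    have e1 : (ENNReal.ofReal lam0).toReal = lam0 := ENNReal.toReal_ofReal hlam0.le
    calc lam0 * ∫ x, |J (H x)| ∂(μ j)
        = ∫ x, |J (H x)| ∂(ENNReal.ofReal lam0 • μ j) := by
          rw [integral_smul_measure, e1, smul_eq_mul]
      _ ≤ ∫ x, |J (H x)| ∂ν :=
          integral_mono_measure hcmp (ae_of_all _ fun x => abs_nonneg _) hJHint_ν
      _ ≤ ∫ x, K * g (H x) ∂ν := by
          refine integral_mono_ae hJHint_ν (hgH.const_mul K) ?_
          exact haeν.mono fun x hx => hJ _ hx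
      _ = K * ∫ x, g (H x) ∂ν := integral_const_mul K _
      _ = K * ∫ u in Ioo (0 : ℝ) 1, g u := by rw [hinteq]
  have hpos : 0 < lam0 := hlam0
  rw [div_mul_eq_mul_div, le_div_iff₀ hpos]
  linarith [key]
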